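/- Let μ be a probability distribution on {1,...,K} that is a mixture μ_k = p·μ^obs_k + (1−p)·μ^mis_k for some probability distribution μ^mis and p ∈ [0,1]. Then for every k, p·F_{μ^obs}(k) ≤ F_μ(k) ≤ p·F_{μ^obs}(k) + (1−p), and these bounds are sharp: for each k and each value t in this interval there exists a probability distribution μ^mis such that the resulting mixture μ satisfies F_μ(k) = t. -/

import Mathlib

open Finset

/-- `μ` is a probability distribution on `{1,...,K}` (indexed by `Fin K`). -/
def IsDist {K : ℕ} (μ : Fin K → ℝ) : Prop :=
  (∀ i, 0 ≤ μ i) ∧ ∑ i, μ i = 1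

/-- CDF of `μ` at threshold `k`: `F_μ(k) = ∑_{i ≤ k} μ_i`. -/
noncomputable def cdf {K : ℕ} (μ : Fin K → ℝ) (k : Fin K) : ℝ :=
  ∑ i ∈ Finset.univ.filter (fun i => i ≤ k), μ i

/-- Embedding of the first `K-1` thresholds into `Fin K`. -/
def emb {K : ℕ} (k : Fin (K - 1)) : Fin K :=
  ⟨k.val, lt_of_lt_of_le k.isLt (Nat.sub_le K 1)⟩

/-- `D(μ,ν) = ∑_{k=1}^{K-1} |F_μ(k) - F_ν(k)|`. -/
noncomputable def Ddist {K : ℕ} (μ ν : Fin K → ℝ) : ℝ :=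
  ∑ k : Fin (K - 1), |cdf μ (emb k) - cdf ν (emb k)|

/-- `π` is a coupling of `μ` and `ν`: nonnegative entries, row sums `μ`, column sums `ν`. -/
def IsCoupling {K : ℕ} (π : Fin K → Fin K → ℝ) (μ ν : Fin K → ℝ) : Prop :=
  (∀ i j, 0 ≤ π i j) ∧ (∀ i, ∑ j, π i j = μ i) ∧ (∀ j, ∑ i, π i j = ν j)

/-- Transport cost `∑_{i,j} |i-j| π_{ij}`. -/
noncomputable def cost {K : ℕ} (π : Fin K → Fin K → ℝ) : ℝ :=
  ∑ i : Fin K, ∑ j : Fin K, |(i : ℝ) - (j : ℝ)| * π i j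

lemma cdf_mix {K : ℕ} (p : ℝ) (μ ν : Fin K → ℝ) (k : Fin K) :
    cdf (fun i => p * μ i + (1 - p) * ν i) k = p * cdf μ k + (1 - p) * cdf ν k := by
  simp [cdf, Finset.sum_add_distrib, Finset.mul_sum]

lemma cdf_nonneg {K : ℕ} {μ : Fin K → ℝ} (h : IsDist μ) (k : Fin K) :
    0 ≤ cdf μ k :=
  Finset.sum_nonneg fun i _ => h.1 i

lemma cdf_le_one {K : ℕ} {μ : Fin K → ℝ} (h : IsDist μ) (k : Fin K) :
    cdf μ k ≤ 1 := by
  rw [← h.2]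
  exact Finset.sum_le_sum_of_subset_of_nonneg (Finset.filter_subset _ _)
    (fun i _ _ => h.1 i)

/-- worst-case CDF bounds under missing data, and their sharpness. -/
theorem stmt5 {K : ℕ} (p : ℝ) (hp : p ∈ Set.Icc (0 : ℝ) 1)
    (μobs : Fin K → ℝ) (hobs : IsDist μobs) :
    (∀ μmis : Fin K → ℝ, IsDist μmis → ∀ k : Fin (K - 1),
      p * cdf μobs (emb k) ≤ cdf (fun i => p * μobs i + (1 - p) * μmis i) (emb k) ∧
      cdf (fun i => p * μobs i + (1 - p) * μmis i) (emb k) ≤ p * cdf μobs (emb k) + (1 - p)) ∧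
    (∀ k : Fin (K - 1),
      ∀ t ∈ Set.Icc (p * cdf μobs (emb k)) (p * cdf μobs (emb k) + (1 - p)),
      ∃ μmis : Fin K → ℝ, IsDist μmis ∧
        cdf (fun i => p * μobs i + (1 - p) * μmis i) (emb k) = t) := by
  obtain ⟨hp0, hp1⟩ := hp
  constructor
  · intro μmis hmis k
    rw [cdf_mix]
    have h0 := cdf_nonneg hmis (emb k)
    have h1 := cdf_le_one hmis (emb k)
    constructor
    · nlinarith
    · nlinarith
  · intro k t ht
    obtain ⟨ht1, ht2⟩ := ht
    rcases eq_or_lt_of_le hp1 with hpe | hplt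
    · refine ⟨μobs, hobs, ?_⟩
      rw [cdf_mix]
      subst hpe
      simp at ht1 ht2 ⊢
      linarith
    · -- p < 1
      have hK1 : 0 < K - 1 := by
        rcases Nat.eq_zero_or_pos (K-1) with h | h
        · exact absurd k.isLt (by omega)
        · exact h
      have hK : 1 < K := by omega
      set c := cdf μobs (emb k) with hc
      set s : ℝ := (t - p * c) / (1 - p) with hs
      have h1p : (0:ℝ) < 1 - p := by linarith
      have hs0 : 0 ≤ s := div_nonneg (by linarith) h1p.le
      have hs1 : s ≤ 1 := by
        rw [div_le_one h1p]; linarith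
      set a : Fin K := ⟨0, by omega⟩ with ha
      set b : Fin K := ⟨K - 1, by omega⟩ with hb
      have hab : a ≠ b := by
        simp [ha, hb, Fin.ext_iff]; omega
      set μmis : Fin K → ℝ := fun i => (if i = a then s else 0) + (if i = b then 1 - s else 0)
        with hmis
      have hsum : ∑ i, μmis i = 1 := by
        rw [hmis]
        rw [Finset.sum_add_distrib, Finset.sum_ite_eq', Finset.sum_ite_eq']
        simp
      refine ⟨μmis, ⟨fun i => by
        simp only [hmis]
        have : (0:ℝ) ≤ if i = a then s else 0 := by positivity
        have : (0:ℝ) ≤ if i = b then 1 - s else 0 := by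
          split <;> linarith
        linarith, hsum⟩, ?_⟩
      rw [cdf_mix]
      have hcdfmis : cdf μmis (emb k) = s := by
        rw [cdf]
        simp only [hmis]
        rw [Finset.sum_add_distrib, Finset.sum_ite_eq', Finset.sum_ite_eq']
        have hamem : a ∈ Finset.univ.filter (fun i => i ≤ emb k) := by
          simp [ha, Fin.le_def, emb]
        have hbmem : b ∉ Finset.univ.filter (fun i => i ≤ emb k) := by
          simp [hb, Fin.le_def, emb]
          omega
        rw [if_pos hamem, if_neg hbmem]
        ring
      rw [hcdfmis, hs]
      field_simp
      rw [hc]; ring
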